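/- arXiv:1404.0818 — 2 statements merged into one kernel-verified Lean document; each statement's English description precedes it below -/
import Mathlib

section
/- Let G be a finite connected graph on n ≥ 2 vertices. Then there exists a rooted tree decomposition (T,β) of G such that: (1) for every node t ∈ V(T), the induced subgraph G[β(t)] is clique-separator free; (2) every adhesion β(s) ∩ β(t) for an edge st of T is a clique in G; and (3) T has at most n − 1 nodes. -/
/-!
Common definitions: separations, stable separations, the improved graph,
external neighbourhoods, connected components, clique separations, and
rooted tree decompositions together with treewidth.
-/

section Defs

variable {V : Type} [Fintype V] [DecidableEq V]

/-- A separation of a graph `G`: a pair `(A, B)` covering the vertex set with no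
edge between `A \ B` and `B \ A`.  Its order is `(A ∩ B).card`. -/
def IsSeparation (G : SimpleGraph V) (A B : Finset V) : Prop :=
  A ∪ B = Finset.univ ∧ ∀ a ∈ A, a ∉ B → ∀ b ∈ B, b ∉ A → ¬G.Adj a b

/-- An `X`–`Y` separation: a separation `(A, B)` with `X ⊆ A` and `Y ⊆ B`. -/
def IsSepFor (G : SimpleGraph V) (X Y A B : Finset V) : Prop :=
  IsSeparation G A B ∧ X ⊆ A ∧ Y ⊆ B

/-- An `X`–`Y` separation of minimum possible order. -/
def IsMinSepFor (G : SimpleGraph V) (X Y A B : Finset V) : Prop :=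
  IsSepFor G X Y A B ∧ ∀ A' B', IsSepFor G X Y A' B' → (A ∩ B).card ≤ (A' ∩ B').card

/-- A separation `(A, B)` is `S`-stable if it is a minimum-order `S_L`–`S_R`
separation for some partition `(S_L, S_R)` of `S`. -/
def IsStable (G : SimpleGraph V) (S A B : Finset V) : Prop :=
  ∃ SL SR, Disjoint SL SR ∧ SL ∪ SR = S ∧ IsMinSepFor G SL SR A B

/-- `conn_G(x, y) < k`: there is a separation of order `< k` with `x ∈ A ∖ B` and
`y ∈ B ∖ A`.  (For adjacent `x, y` no such separation exists, i.e. `conn = +∞`.) -/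
def ConnLt (G : SimpleGraph V) (x y : V) (k : ℕ) : Prop :=
  ∃ A B, IsSeparation G A B ∧ x ∈ A ∧ x ∉ B ∧ y ∈ B ∧ y ∉ A ∧ (A ∩ B).card < k

/-- A graph is `k`-complemented when `conn(x,y) ≥ k` implies that `x` and `y` are
adjacent; equivalently, any two distinct nonadjacent vertices are separated by a
separation of order `< k`. -/
def KComplemented (G : SimpleGraph V) (k : ℕ) : Prop :=
  ∀ x y, x ≠ y → ¬G.Adj x y → ConnLt G x y k

lemma IsSeparation.symm2 {G : SimpleGraph V} {A B : Finset V} (h : IsSeparation G A B) :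
    IsSeparation G B A :=
  ⟨by rw [Finset.union_comm]; exact h.1,
   fun a ha ha' b hb hb' hadj => h.2 b hb hb' a ha ha' hadj.symm⟩

/-- The `k`-improved graph `G^{(k)}`: same vertices, and `xy` is an edge
iff `conn_G(x,y) ≥ k` (in particular all edges of `G` are kept). -/
def improvedGraph (G : SimpleGraph V) (k : ℕ) : SimpleGraph V where
  Adj x y := x ≠ y ∧ ¬ConnLt G x y k
  symm := by
    constructor
    rintro x y ⟨hxy, h⟩
    refine ⟨hxy.symm, ?_⟩
    rintro ⟨A, B, hsep, hy, hy', hx, hx', hc⟩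
    exact h ⟨B, A, hsep.symm2, hx, hx', hy, hy', by rwa [Finset.inter_comm]⟩
  loopless := ⟨fun x h => h.1 rfl⟩

/-- The external neighbourhood `N_G(Z)`: vertices outside `Z` with a neighbour in `Z`. -/
def extNbhd (G : SimpleGraph V) (Z : Set V) : Set V :=
  {v | v ∉ Z ∧ ∃ z ∈ Z, G.Adj v z}

/-- `Z` is the vertex set of a connected component of `G - X`: it is disjoint from `X`,
induces a connected subgraph, and all its neighbours outside itself lie in `X`. -/
def IsCompAway (G : SimpleGraph V) (X Z : Set V) : Prop :=
  Disjoint Z X ∧ (G.induce Z).Connected ∧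
    ∀ ⦃v z : V⦄, z ∈ Z → G.Adj v z → v ∉ Z → v ∈ X

/-- The subgraph of `G` induced on `W` admits no clique separation: there is no
separation `(A, B)` of `G[W]` with `A ∖ B ≠ ∅`, `B ∖ A ≠ ∅` and `A ∩ B` a clique. -/
def CliqueSepFreeOn (G : SimpleGraph V) (W : Finset V) : Prop :=
  ¬∃ A B : Finset V, A ∪ B = W ∧
      (∀ a ∈ A, a ∉ B → ∀ b ∈ B, b ∉ A → ¬G.Adj a b) ∧
      (A \ B).Nonempty ∧ (B \ A).Nonempty ∧ G.IsClique (↑(A ∩ B) : Set V)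

/-- A rooted tree decomposition of the subgraph of `G` induced on `W`.
The rooted tree is given by a finite node type with a parent function
(every node reaches the root by iterating `parent`);
for every vertex of `W` the nodes whose bags contain it form a nonempty connected
subtree, and every edge of `G[W]` lies inside some bag. -/
structure RTDOn (V : Type) [Fintype V] [DecidableEq V] (G : SimpleGraph V) (W : Finset V) where
  ι : Type
  instFintype : Fintype ι
  instDecEq : DecidableEq ι
  root : ι
  parent : ι → ι
  parent_root : parent root = root
  reaches_root : ∀ t, ∃ n, parent^[n] t = root
  bag : ι → Finset V
  bag_subset : ∀ t, bag t ⊆ W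
  bags_connected : ∀ v ∈ W,
    ((SimpleGraph.fromRel fun s t => parent s = t).induce {t | v ∈ bag t}).Connected
  edge_in_bag : ∀ u ∈ W, ∀ v ∈ W, G.Adj u v → ∃ t, u ∈ bag t ∧ v ∈ bag t

/-- A rooted tree decomposition of `G`. -/
abbrev RTD (V : Type) [Fintype V] [DecidableEq V] (G : SimpleGraph V) : Type 1 :=
  RTDOn V G Finset.univ

namespace RTDOn

variable {G : SimpleGraph V} {W : Finset V}

instance (D : RTDOn V G W) : Fintype D.ι := D.instFintype
instance (D : RTDOn V G W) : DecidableEq D.ι := D.instDecEq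

/-- The decomposition has width at most `w`, i.e. all bags have size at most `w + 1`. -/
def widthLe (D : RTDOn V G W) (w : ℕ) : Prop := ∀ t, (D.bag t).card ≤ w + 1

/-- The decomposition has adhesion width at most `ℓ`: for every tree edge
`(t, parent t)` the intersection of the two bags has size at most `ℓ`. -/
def adhesionLe (D : RTDOn V G W) (l : ℕ) : Prop :=
  ∀ t, t ≠ D.root → (D.bag t ∩ D.bag (D.parent t)).card ≤ l

/-- A family of potential bags captures a decomposition if every bag belongs to it. -/
def captures (D : RTDOn V G W) (ℬ : Finset (Finset V)) : Prop := ∀ t, D.bag t ∈ ℬ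

/-- `γ(t)`: union of the bags at all descendants of `t`. -/
def gammaSet (D : RTDOn V G W) (t : D.ι) : Set V :=
  {v | ∃ s, (∃ n, D.parent^[n] s = t) ∧ v ∈ D.bag s}

/-- `σ(t)`: the adhesion of `t` with its parent (empty at the root). -/
def sigmaBag (D : RTDOn V G W) (t : D.ι) : Finset V :=
  if t = D.root then ∅ else D.bag t ∩ D.bag (D.parent t)

/-- `α(t) = γ(t) ∖ σ(t)`. -/
def alphaSet (D : RTDOn V G W) (t : D.ι) : Set V := D.gammaSet t \ ↑(D.sigmaBag t)

end RTDOn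

/-- A rooted tree decomposition is connectivity-sensitive when every `G[α(t)]`
is connected and `σ(t) = N_G(α(t))`. -/
def IsCSDecomp {G : SimpleGraph V} (D : RTD V G) : Prop :=
  ∀ t, (G.induce (D.alphaSet t)).Connected ∧ extNbhd G (D.alphaSet t) = ↑(D.sigmaBag t)

/-- The treewidth of `G`: the least `w` such that `G` has a (rooted) tree
decomposition of width at most `w`. -/
noncomputable def treewidth (G : SimpleGraph V) : ℕ :=
  sInf {w : ℕ | ∃ D : RTD V G, D.widthLe w}

/-- `ℬ^{≤q}`: all sets of size at most `q` contained in some member of `ℬ`. -/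
def belowFam (ℬ : Finset (Finset V)) (q : ℕ) : Finset (Finset V) :=
  Finset.univ.filter fun X => X.card ≤ q ∧ ∃ B ∈ ℬ, X ⊆ B

end Defs

section Aux

variable {V : Type} [Fintype V] [DecidableEq V]

/-- Intermediate data for building a clique minimal separator decomposition. -/
structure Core (G : SimpleGraph V) (W C : Finset V) where
  m : ℕ
  bag : ℕ → Finset V
  par : ℕ → ℕ
  hm : 0 < m
  par0 : par 0 = 0
  parlt : ∀ t, 0 < t → t < m → par t < t
  sub : ∀ t, t < m → bag t ⊆ W
  csf : ∀ t, t < m → CliqueSepFreeOn G (bag t)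
  adh : ∀ t, 0 < t → t < m → G.IsClique (↑(bag t ∩ bag (par t)) : Set V)
  cib : ∀ K : Finset V, K ⊆ W → G.IsClique (↑K : Set V) → ∃ t, t < m ∧ K ⊆ bag t
  conn : ∀ v ∈ W, ∃ t₀, t₀ < m ∧ v ∈ bag t₀ ∧
    ∀ t, t < m → v ∈ bag t → t = t₀ ∨ (0 < t ∧ v ∈ bag (par t))
  rootC : C ⊆ bag 0
  down : ∀ c ∈ C, ∀ t, 0 < t → t < m → c ∈ bag t → c ∈ bag (par t)

variable {G : SimpleGraph V}

/-- The "top" node of a vertex is minimal among nodes containing it. -/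
lemma t0_le {m : ℕ} {bag : ℕ → Finset V} {par : ℕ → ℕ}
    (parlt : ∀ t, 0 < t → t < m → par t < t) {v : V} {t₀ : ℕ}
    (hcl : ∀ t, t < m → v ∈ bag t → t = t₀ ∨ (0 < t ∧ v ∈ bag (par t))) :
    ∀ t, t < m → v ∈ bag t → t₀ ≤ t := by
  intro t
  induction t using Nat.strong_induction_on with
  | _ t ih =>
    intro htm hv
    rcases hcl t htm hv with rfl | ⟨ht0, hpar⟩
    · exact le_rfl
    · have hlt := parlt t ht0 htm
      exact le_trans (ih (par t) hlt (lt_trans hlt htm) hpar) (le_of_lt hlt)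

/-- Base case: a clique-separator-free `W` gives a one-node decomposition. -/
def Core.single (G : SimpleGraph V) (W C : Finset V) (hCW : C ⊆ W)
    (h : CliqueSepFreeOn G W) : Core G W C where
  m := 1
  bag := fun _ => W
  par := fun _ => 0
  hm := one_pos
  par0 := rfl
  parlt := fun t ht htm => absurd htm (by omega)
  sub := fun _ _ => le_rfl
  csf := fun _ _ => h
  adh := fun t ht htm => absurd htm (by omega)
  cib := fun K hK _ => ⟨0, one_pos, hK⟩
  conn := fun v hv => ⟨0, one_pos, hv, fun t ht _ => Or.inl (by omega)⟩
  rootC := hCW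
  down := fun c _ t ht htm => absurd htm (by omega)


set_option linter.unusedSectionVars false in
/-- From a clique separation of `G[W]` and a clique `C ⊆ W`, extract a component `Z`
avoiding `C` together with the separator clique `S`. -/
lemma split_exists (G : SimpleGraph V) (W C : Finset V) (hCW : C ⊆ W)
    (hC : G.IsClique (↑C : Set V)) (hnot : ¬ CliqueSepFreeOn G W) :
    ∃ Z S : Finset V, Z.Nonempty ∧ Z ⊆ W ∧ S ⊆ W ∧ Disjoint Z S ∧ Disjoint Z C ∧
      G.IsClique (↑S : Set V) ∧ (Z ∪ S).card < W.card ∧ (W \ Z).card < W.card ∧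
      (∀ z ∈ Z, ∀ w ∈ W, G.Adj w z → w ∉ Z → w ∈ S) := by
  classical
  rw [CliqueSepFreeOn, not_not] at hnot
  obtain ⟨A, B, hAB, hsep, hA, hB, hScl⟩ := hnot
  -- reduce to the case `C ⊆ A`
  have main : ∀ A B : Finset V, A ∪ B = W →
      (∀ a ∈ A, a ∉ B → ∀ b ∈ B, b ∉ A → ¬G.Adj a b) →
      (A \ B).Nonempty → (B \ A).Nonempty → G.IsClique (↑(A ∩ B) : Set V) → C ⊆ A →
      ∃ Z S : Finset V, Z.Nonempty ∧ Z ⊆ W ∧ S ⊆ W ∧ Disjoint Z S ∧ Disjoint Z C ∧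
        G.IsClique (↑S : Set V) ∧ (Z ∪ S).card < W.card ∧ (W \ Z).card < W.card ∧
        (∀ z ∈ Z, ∀ w ∈ W, G.Adj w z → w ∉ Z → w ∈ S) := by
    clear hAB hsep hA hB hScl A B
    intro A B hAB hsep hA hB hScl hCA
    set S : Finset V := A ∩ B with hS
    obtain ⟨z₀, hz₀⟩ := hB
    rw [Finset.mem_sdiff] at hz₀
    -- the auxiliary graph on `W \ S`
    set G' : SimpleGraph V :=
      { Adj := fun x y => G.Adj x y ∧ x ∈ W \ S ∧ y ∈ W \ S
        symm := by constructor; rintro x y ⟨h1, h2, h3⟩; exact ⟨h1.symm, h3, h2⟩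
        loopless := by constructor; rintro x ⟨h1, _⟩; exact G.loopless.irrefl x h1 } with hG'
    have key : ∀ u v : V, G'.Reachable u v → u ∈ B \ A → v ∈ B \ A := by
      intro u v hr
      obtain ⟨w⟩ := hr
      induction w with
      | nil => exact id
      | cons h p ih =>
        rename_i x y _
        intro hu
        rw [Finset.mem_sdiff] at hu
        apply ih
        obtain ⟨hadj, hx, hy⟩ := h
        rw [Finset.mem_sdiff] at hy
        have hyAB : y ∈ A ∪ B := hAB ▸ hy.1
        rw [Finset.mem_union] at hyAB
        rw [Finset.mem_sdiff]
        by_cases hyB : y ∈ B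
        · refine ⟨hyB, fun hyA => hy.2 ?_⟩
          exact Finset.mem_inter.mpr ⟨hyA, hyB⟩
        · exfalso
          have hyA : y ∈ A := hyAB.resolve_right hyB
          exact hsep y hyA hyB x hu.1 hu.2 hadj.symm
    set Z : Finset V := (W \ S).filter (fun v => G'.Reachable z₀ v) with hZ
    have hz₀WS : z₀ ∈ W \ S := by
      rw [Finset.mem_sdiff]
      refine ⟨hAB ▸ Finset.mem_union_right _ hz₀.1, fun h => hz₀.2 (Finset.mem_inter.mp h).1⟩
    have hz₀Z : z₀ ∈ Z := Finset.mem_filter.mpr ⟨hz₀WS, SimpleGraph.Reachable.refl _⟩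
    have hZBA : ∀ v ∈ Z, v ∈ B \ A := by
      intro v hv
      rw [hZ, Finset.mem_filter] at hv
      exact key z₀ v hv.2 (Finset.mem_sdiff.mpr hz₀)
    have hZWS : Z ⊆ W \ S := Finset.filter_subset _ _
    have hZW : Z ⊆ W := hZWS.trans (Finset.sdiff_subset)
    have hSW : S ⊆ W := by
      rw [hS, ← hAB]; exact (Finset.inter_subset_left).trans Finset.subset_union_left
    have hZS : Disjoint Z S := by
      rw [Finset.disjoint_left]
      intro v hv hvS
      exact (Finset.mem_sdiff.mp (hZWS hv)).2 hvS
    have hZC : Disjoint Z C := by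
      rw [Finset.disjoint_left]
      intro v hv hvC
      exact (Finset.mem_sdiff.mp (hZBA v hv)).2 (hCA hvC)
    have hN : ∀ z ∈ Z, ∀ w ∈ W, G.Adj w z → w ∉ Z → w ∈ S := by
      intro z hz w hw hadj hwZ
      by_contra hwS
      apply hwZ
      rw [hZ, Finset.mem_filter] at hz ⊢
      have hwWS : w ∈ W \ S := Finset.mem_sdiff.mpr ⟨hw, hwS⟩
      refine ⟨hwWS, hz.2.trans ?_⟩
      exact SimpleGraph.Adj.reachable (show G'.Adj z w from ⟨hadj.symm, hz.1, hwWS⟩)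
    obtain ⟨a₀, ha₀⟩ := hA
    rw [Finset.mem_sdiff] at ha₀
    have ha₀W : a₀ ∈ W := hAB ▸ Finset.mem_union_left _ ha₀.1
    have hcard1 : (Z ∪ S).card < W.card := by
      apply Finset.card_lt_card
      rw [Finset.ssubset_iff_of_subset (Finset.union_subset hZW hSW)]
      refine ⟨a₀, ha₀W, fun h => ?_⟩
      rcases Finset.mem_union.mp h with h | h
      · exact (Finset.mem_sdiff.mp (hZBA a₀ h)).2 ha₀.1
      · exact ha₀.2 (Finset.mem_inter.mp h).2
    have hcard2 : (W \ Z).card < W.card := by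
      apply Finset.card_lt_card
      rw [Finset.ssubset_iff_of_subset (Finset.sdiff_subset)]
      exact ⟨z₀, hZW hz₀Z, fun h => (Finset.mem_sdiff.mp h).2 hz₀Z⟩
    exact ⟨Z, S, ⟨z₀, hz₀Z⟩, hZW, hSW, hZS, hZC, hScl, hcard1, hcard2, hN⟩
  by_cases hCA : C ⊆ A
  · exact main A B hAB hsep hA hB hScl hCA
  · have hCB : C ⊆ B := by
      obtain ⟨c, hcC, hcA⟩ := Finset.not_subset.mp hCA
      have hcB : c ∈ B := by
        have := hAB ▸ hCW hcC
        exact (Finset.mem_union.mp this).resolve_left hcA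
      intro c' hc'
      by_contra hc'B
      have hc'A : c' ∈ A := by
        have := hAB ▸ hCW hc'
        exact (Finset.mem_union.mp this).resolve_right hc'B
      have hne : c' ≠ c := fun h => hcA (h ▸ hc'A)
      exact hsep c' hc'A hc'B c hcB hcA (hC (by exact_mod_cast hc') (by exact_mod_cast hcC) hne)
    exact main B A (by rw [Finset.union_comm]; exact hAB)
      (fun a ha ha' b hb hb' hadj => hsep b hb hb' a ha ha' hadj.symm)
      hB hA (by rwa [Finset.inter_comm]) hCB
set_option linter.unusedSectionVars false in
/-- Glue a decomposition of `Z ∪ S` below a decomposition of `W \ Z`. -/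
def Core.glue {W C Z S : Finset V} (hZW : Z ⊆ W) (hSW : S ⊆ W) (hZS : Disjoint Z S)
    (hZC : Disjoint Z C) (hScl : G.IsClique (↑S : Set V))
    (hN : ∀ z ∈ Z, ∀ w ∈ W, G.Adj w z → w ∉ Z → w ∈ S)
    (D₁ : Core G (Z ∪ S) S) (D₂ : Core G (W \ Z) C)
    (a : ℕ) (ham : a < D₂.m) (haS : S ⊆ D₂.bag a) : Core G W C := by
  classical
  have hint : ∀ v, v ∈ Z ∪ S → v ∉ Z → v ∈ S := by
    intro v hv hvZ
    exact (Finset.mem_union.mp hv).resolve_left hvZ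
  have hbag1S : ∀ t, t < D₁.m → ∀ v, v ∈ D₁.bag t → v ∉ Z → v ∈ S := by
    intro t ht v hv hvZ
    exact hint v (D₁.sub t ht hv) hvZ
  refine
  { m := D₂.m + D₁.m
    bag := fun t => if t < D₂.m then D₂.bag t else D₁.bag (t - D₂.m)
    par := fun t => if t < D₂.m then D₂.par t else if t = D₂.m then a else D₂.m + D₁.par (t - D₂.m)
    hm := Nat.add_pos_left D₂.hm _
    par0 := by beta_reduce; rw [if_pos D₂.hm]; exact D₂.par0
    parlt := ?_, sub := ?_, csf := ?_, adh := ?_, cib := ?_, conn := ?_, rootC := ?_, down := ?_ }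
  · -- parlt
    intro t ht htm
    beta_reduce
    by_cases h2 : t < D₂.m
    · rw [if_pos h2]; exact D₂.parlt t ht h2
    · rw [if_neg h2]
      by_cases h3 : t = D₂.m
      · rw [if_pos h3]; omega
      · rw [if_neg h3]
        have := D₁.parlt (t - D₂.m) (by omega) (by omega)
        omega
  · -- sub
    intro t htm
    beta_reduce
    by_cases h2 : t < D₂.m
    · rw [if_pos h2]; exact (D₂.sub t h2).trans (Finset.sdiff_subset)
    · rw [if_neg h2]
      exact (D₁.sub (t - D₂.m) (by omega)).trans (Finset.union_subset hZW hSW)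
  · -- csf
    intro t htm
    beta_reduce
    by_cases h2 : t < D₂.m
    · rw [if_pos h2]; exact D₂.csf t h2
    · rw [if_neg h2]; exact D₁.csf (t - D₂.m) (by omega)
  · -- adh
    intro t ht htm
    beta_reduce
    by_cases h2 : t < D₂.m
    · have hp2 : D₂.par t < D₂.m := lt_trans (D₂.parlt t ht h2) h2
      rw [if_pos h2, if_pos h2, if_pos hp2]
      exact D₂.adh t ht h2
    · rw [if_neg h2, if_neg h2]
      by_cases h3 : t = D₂.m
      · rw [if_pos h3, if_pos ham]
        apply hScl.subset
        intro v hv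
        rw [Finset.mem_coe, Finset.mem_inter] at hv
        refine hbag1S (t - D₂.m) (by omega) v hv.1 (fun hvZ => ?_)
        have := (D₂.sub a ham) hv.2
        exact (Finset.mem_sdiff.mp this).2 hvZ
      · have hp1 : D₁.par (t - D₂.m) < t - D₂.m := D₁.parlt (t - D₂.m) (by omega) (by omega)
        rw [if_neg h3, if_neg (by omega : ¬ D₂.m + D₁.par (t - D₂.m) < D₂.m)]
        rw [Nat.add_sub_cancel_left]
        exact D₁.adh (t - D₂.m) (by omega) (by omega)
  · -- cib
    intro K hKW hKcl
    by_cases hKZ : (K ∩ Z).Nonempty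
    · obtain ⟨z, hz⟩ := hKZ
      rw [Finset.mem_inter] at hz
      have hK1 : K ⊆ Z ∪ S := by
        intro k hk
        by_cases hkZ : k ∈ Z
        · exact Finset.mem_union_left _ hkZ
        · have hne : k ≠ z := fun h => hkZ (h ▸ hz.2)
          have hadj : G.Adj k z := hKcl (by exact_mod_cast hk) (by exact_mod_cast hz.1) hne
          exact Finset.mem_union_right _ (hN z hz.2 k (hKW hk) hadj hkZ)
      obtain ⟨t, ht, hKt⟩ := D₁.cib K hK1 hKcl
      exact ⟨D₂.m + t, by omega, by
        beta_reduce
        rw [if_neg (by omega : ¬ D₂.m + t < D₂.m), Nat.add_sub_cancel_left]; exact hKt⟩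
    · have hK2 : K ⊆ W \ Z := by
        intro k hk
        rw [Finset.mem_sdiff]
        refine ⟨hKW hk, fun hkZ => hKZ ⟨k, Finset.mem_inter.mpr ⟨hk, hkZ⟩⟩⟩
      obtain ⟨t, ht, hKt⟩ := D₂.cib K hK2 hKcl
      exact ⟨t, by omega, by beta_reduce; rw [if_pos ht]; exact hKt⟩
  · -- conn
    intro v hvW
    by_cases hvZ : v ∈ Z
    · obtain ⟨t₀, ht₀m, ht₀, hcl⟩ := D₁.conn v (Finset.mem_union_left _ hvZ)
      refine ⟨D₂.m + t₀, by omega, by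
        beta_reduce
        rw [if_neg (by omega : ¬ D₂.m + t₀ < D₂.m), Nat.add_sub_cancel_left]; exact ht₀, ?_⟩
      intro t htm hvt
      beta_reduce at hvt ⊢
      by_cases h2 : t < D₂.m
      · exfalso
        rw [if_pos h2] at hvt
        exact (Finset.mem_sdiff.mp (D₂.sub t h2 hvt)).2 hvZ
      · rw [if_neg h2] at hvt
        rcases hcl (t - D₂.m) (by omega) hvt with h | ⟨hpos, hpar⟩
        · left; omega
        · right
          refine ⟨by omega, ?_⟩
          rw [if_neg h2, if_neg (by omega : ¬ t = D₂.m),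
            if_neg (by omega : ¬ D₂.m + D₁.par (t - D₂.m) < D₂.m), Nat.add_sub_cancel_left]
          exact hpar
    · have hvW2 : v ∈ W \ Z := Finset.mem_sdiff.mpr ⟨hvW, hvZ⟩
      obtain ⟨t₀, ht₀m, ht₀, hcl⟩ := D₂.conn v hvW2
      refine ⟨t₀, by omega, by beta_reduce; rw [if_pos ht₀m]; exact ht₀, ?_⟩
      intro t htm hvt
      beta_reduce at hvt ⊢
      by_cases h2 : t < D₂.m
      · rw [if_pos h2] at hvt
        rcases hcl t h2 hvt with h | ⟨hpos, hpar⟩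
        · exact Or.inl h
        · right
          have hp2 : D₂.par t < D₂.m := lt_trans (D₂.parlt t hpos h2) h2
          rw [if_pos h2, if_pos hp2]
          exact ⟨hpos, hpar⟩
      · rw [if_neg h2] at hvt
        have hvS : v ∈ S := hbag1S (t - D₂.m) (by omega) v hvt hvZ
        right
        by_cases h3 : t = D₂.m
        · rw [if_neg h2, if_pos h3, if_pos ham]
          exact ⟨by omega, haS hvS⟩
        · rw [if_neg h2, if_neg h3,
            if_neg (by omega : ¬ D₂.m + D₁.par (t - D₂.m) < D₂.m), Nat.add_sub_cancel_left]
          exact ⟨by omega, D₁.down v hvS (t - D₂.m) (by omega) (by omega) hvt⟩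
  · -- rootC
    beta_reduce
    rw [if_pos D₂.hm]
    exact D₂.rootC
  · -- down
    intro c hcC t ht htm hct
    beta_reduce at hct ⊢
    have hcZ : c ∉ Z := Finset.disjoint_right.mp hZC hcC
    by_cases h2 : t < D₂.m
    · have hp2 : D₂.par t < D₂.m := lt_trans (D₂.parlt t ht h2) h2
      rw [if_pos h2] at hct
      rw [if_pos h2, if_pos hp2]
      exact D₂.down c hcC t ht h2 hct
    · rw [if_neg h2] at hct
      have hcS : c ∈ S := hbag1S (t - D₂.m) (by omega) c hct hcZ
      by_cases h3 : t = D₂.m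
      · rw [if_neg h2, if_pos h3, if_pos ham]
        exact haS hcS
      · rw [if_neg h2, if_neg h3,
          if_neg (by omega : ¬ D₂.m + D₁.par (t - D₂.m) < D₂.m), Nat.add_sub_cancel_left]
        exact D₁.down c hcS (t - D₂.m) (by omega) (by omega) hct
set_option linter.unusedSectionVars false in
lemma core_exists (G : SimpleGraph V) :
    ∀ (n : ℕ) (W C : Finset V), W.card ≤ n → C ⊆ W → G.IsClique (↑C : Set V) →
      Nonempty (Core G W C) := by
  intro n
  induction n with
  | zero =>
    intro W C hcard hCW _
    have hW : W = ∅ := Finset.card_eq_zero.mp (Nat.le_zero.mp hcard)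
    refine ⟨Core.single G W C hCW ?_⟩
    rintro ⟨A, B, hAB, -, ⟨x, hx⟩, -⟩
    have : x ∈ W := by
      rw [← hAB]
      exact Finset.mem_union_left _ (Finset.mem_sdiff.mp hx).1
    simp [hW] at this
  | succ n ih =>
    intro W C hcard hCW hC
    by_cases h : CliqueSepFreeOn G W
    · exact ⟨Core.single G W C hCW h⟩
    · obtain ⟨Z, S, hZne, hZW, hSW, hZS, hZC, hScl, hc1, hc2, hN⟩ :=
        split_exists G W C hCW hC h
      obtain ⟨D₁⟩ := ih (Z ∪ S) S (by omega) Finset.subset_union_right hScl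
      obtain ⟨D₂⟩ := ih (W \ Z) C (by omega)
        (fun c hc => Finset.mem_sdiff.mpr ⟨hCW hc, Finset.disjoint_right.mp hZC hc⟩) hC
      obtain ⟨a, ham, haS⟩ := D₂.cib S
        (fun s hs => Finset.mem_sdiff.mpr ⟨hSW hs, Finset.disjoint_right.mp hZS hs⟩) hScl
      exact ⟨Core.glue hZW hSW hZS hZC hScl hN D₁ D₂ a ham haS⟩

set_option linter.unusedSectionVars false in
/-- Prune redundant nodes (bags contained in the parent bag). -/
lemma core_prune (G : SimpleGraph V) (W C : Finset V) :
    ∀ (n : ℕ) (D : Core G W C), D.m ≤ n →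
      ∃ D' : Core G W C, ∀ t, 0 < t → t < D'.m → ¬ D'.bag t ⊆ D'.bag (D'.par t) := by
  intro n
  induction n with
  | zero => intro D h; exact absurd D.hm (by omega)
  | succ n ih =>
    intro D hDn
    by_cases hgood : ∀ t, 0 < t → t < D.m → ¬ D.bag t ⊆ D.bag (D.par t)
    · exact ⟨D, hgood⟩
    push_neg at hgood
    obtain ⟨t', ht'0, ht'm, ht'sub⟩ := hgood
    have hpt' : D.par t' < t' := D.parlt t' ht'0 ht'm
    set lift : ℕ → ℕ := fun s => if s < t' then s else s + 1 with hlift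
    set unlift : ℕ → ℕ := fun s => if s < t' then s else s - 1 with hunlift
    have hlift_lt : ∀ s, s < D.m - 1 → lift s < D.m := by
      intro s hs; simp only [hlift]; split <;> omega
    have hlift_ne : ∀ s, lift s ≠ t' := by intro s; simp only [hlift]; split <;> omega
    have hlift_pos : ∀ s, 0 < s → 0 < lift s := by
      intro s hs; simp only [hlift]; split <;> omega
    have hunlift_lt : ∀ s, s < D.m → s ≠ t' → unlift s < D.m - 1 := by
      intro s h1 h2; simp only [hunlift]; split <;> omega
    have hul : ∀ s, s ≠ t' → lift (unlift s) = s := by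
      intro s h; simp only [hlift, hunlift]; split_ifs <;> omega
    have hlu : ∀ s, unlift (lift s) = s := by
      intro s; simp only [hlift, hunlift]; split_ifs <;> omega
    have hmono : ∀ s u, s ≠ t' → u ≠ t' → s < u → unlift s < unlift u := by
      intro s u h1 h2 h3; simp only [hunlift]; split_ifs <;> omega
    set par' : ℕ → ℕ := fun s =>
      unlift (if D.par (lift s) = t' then D.par t' else D.par (lift s)) with hpar'
    have hpar'_spec : ∀ s, s < D.m - 1 → 0 < s →
        (par' s < s ∧ D.bag (lift (par' s)) = D.bag (D.par (lift s)) ∨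
         par' s < s ∧ D.par (lift s) = t' ∧ lift (par' s) = D.par t') := by
      intro s hs h0
      have hls : lift s < D.m := hlift_lt s hs
      have h0l : 0 < lift s := hlift_pos s h0
      have hplt : D.par (lift s) < lift s := D.parlt _ h0l hls
      by_cases hcase : D.par (lift s) = t'
      · right
        have hps : par' s = unlift (D.par t') := by simp only [hpar', hcase, if_pos]
        have h1 : lift (par' s) = D.par t' := by rw [hps]; exact hul _ (by omega)
        refine ⟨?_, hcase, h1⟩
        have hh := hmono (D.par t') (lift s) (by omega) (hlift_ne s) (by omega)
        rw [hlu s] at hh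
        rw [hps]; exact hh
      · left
        have hps : par' s = unlift (D.par (lift s)) := by simp only [hpar', if_neg hcase]
        have h1 : lift (par' s) = D.par (lift s) := by rw [hps]; exact hul _ hcase
        refine ⟨?_, by rw [h1]⟩
        have hh := hmono (D.par (lift s)) (lift s) hcase (hlift_ne s) hplt
        rw [hlu s] at hh
        rw [hps]; exact hh
    have hpt'm : D.par t' < D.m := lt_trans hpt' ht'm
    -- the old adhesion at `t'` absorbs into `bag t'`
    have habs : ∀ u, u < D.m → D.par u = t' → ∀ v, v ∈ D.bag u → v ∈ D.bag (D.par t') →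
        v ∈ D.bag t' := by
      intro u hu hput v hv1 hv2
      have hvW : v ∈ W := D.sub u hu hv1
      obtain ⟨t₀, ht₀m, ht₀, hcl⟩ := D.conn v hvW
      have hle := t0_le D.parlt hcl
      have h0u : 0 < u := by
        rcases Nat.eq_zero_or_pos u with rfl | h
        · rw [D.par0] at hput; omega
        · exact h
      have htu : t' < u := hput ▸ D.parlt u h0u hu
      rcases hcl u hu hv1 with rfl | ⟨-, hp⟩
      · have := hle (D.par t') hpt'm hv2
        omega
      · rwa [hput] at hp
    have hD' : ∃ D' : Core G W C, D'.m = D.m - 1 := by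
      refine ⟨{ m := D.m - 1, bag := fun s => D.bag (lift s), par := par'
                hm := by omega
                par0 := ?_, parlt := ?_, sub := ?_, csf := ?_, adh := ?_
                cib := ?_, conn := ?_, rootC := ?_, down := ?_ }, rfl⟩
      · -- par0
        have h0 : lift 0 = 0 := by simp only [hlift]; split <;> omega
        have : D.par (lift 0) = 0 := by rw [h0, D.par0]
        simp only [hpar', this, if_neg (by omega : ¬ (0:ℕ) = t')]
        simp only [hunlift]; split <;> omega
      · -- parlt
        intro s hs hsm
        rcases hpar'_spec s hsm hs with ⟨h, _⟩ | ⟨h, _⟩ <;> exact h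
      · -- sub
        intro s hs; exact D.sub _ (hlift_lt s hs)
      · -- csf
        intro s hs; exact D.csf _ (hlift_lt s hs)
      · -- adh
        intro s hs hsm
        beta_reduce
        have hls : lift s < D.m := hlift_lt s hsm
        have h0l : 0 < lift s := hlift_pos s hs
        rcases hpar'_spec s hsm hs with ⟨-, heq⟩ | ⟨-, hcase, heq⟩
        · rw [heq]; exact D.adh (lift s) h0l hls
        · rw [heq]
          apply (D.adh (lift s) h0l hls).subset
          rw [hcase]
          intro v hv
          rw [Finset.mem_coe, Finset.mem_inter] at hv
          rw [Finset.mem_coe, Finset.mem_inter]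
          exact ⟨hv.1, habs (lift s) hls hcase v hv.1 hv.2⟩
      · -- cib
        intro K hKW hKcl
        obtain ⟨t, htm, hKt⟩ := D.cib K hKW hKcl
        by_cases hne : t = t'
        · refine ⟨unlift (D.par t'), hunlift_lt _ hpt'm (by omega), ?_⟩
          beta_reduce
          rw [hul _ (by omega)]
          exact (hKt.trans (hne ▸ ht'sub))
        · exact ⟨unlift t, hunlift_lt _ htm hne, by beta_reduce; rw [hul _ hne]; exact hKt⟩
      · -- conn
        intro v hvW
        obtain ⟨t₀, ht₀m, ht₀, hcl⟩ := D.conn v hvW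
        by_cases h0 : t₀ = t'
        · refine ⟨unlift (D.par t'), hunlift_lt _ hpt'm (by omega), ?_, ?_⟩
          · beta_reduce; rw [hul _ (by omega)]
            exact ht'sub (h0 ▸ ht₀)
          · intro s hsm hvs
            beta_reduce at hvs ⊢
            right
            have hs0 : 0 < s := by
              rcases Nat.eq_zero_or_pos s with rfl | h
              · exfalso
                have hl0 : lift 0 = 0 := by simp only [hlift]; split <;> omega
                rcases hcl 0 (by omega) (by rwa [hl0] at hvs) with h | ⟨h, -⟩ <;> omega
              · exact h
            refine ⟨hs0, ?_⟩
            rcases hcl (lift s) (hlift_lt s hsm) hvs with heq | ⟨-, hp⟩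
            · exact absurd (heq.trans h0) (hlift_ne s)
            rcases hpar'_spec s hsm hs0 with ⟨-, heq⟩ | ⟨-, hcase, heq⟩
            · rw [heq]; exact hp
            · rw [heq]
              exact ht'sub (hcase ▸ hp)
        · refine ⟨unlift t₀, hunlift_lt _ ht₀m h0, by beta_reduce; rw [hul _ h0]; exact ht₀, ?_⟩
          intro s hsm hvs
          beta_reduce at hvs ⊢
          rcases hcl (lift s) (hlift_lt s hsm) hvs with heq | ⟨hpos, hp⟩
          · left; rw [← heq, hlu]
          · right
            have hs0 : 0 < s := by
              rcases Nat.eq_zero_or_pos s with rfl | h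
              · exfalso
                have hl0 : lift 0 = 0 := by simp only [hlift]; split <;> omega
                rw [hl0] at hpos; omega
              · exact h
            refine ⟨hs0, ?_⟩
            rcases hpar'_spec s hsm hs0 with ⟨-, heq⟩ | ⟨-, hcase, heq⟩
            · rw [heq]; exact hp
            · rw [heq]; exact ht'sub (hcase ▸ hp)
      · -- rootC
        beta_reduce
        have h0 : lift 0 = 0 := by simp only [hlift]; split <;> omega
        rw [h0]; exact D.rootC
      · -- down
        intro c hcC s hs hsm hcs
        beta_reduce at hcs ⊢
        have hp := D.down c hcC (lift s) (hlift_pos s hs) (hlift_lt s hsm) hcs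
        rcases hpar'_spec s hsm hs with ⟨-, heq⟩ | ⟨-, hcase, heq⟩
        · rw [heq]; exact hp
        · rw [heq]; exact ht'sub (hcase ▸ hp)
    obtain ⟨D', hD'm⟩ := hD'
    exact ih D' (by omega)
end Aux

theorem stmt17' {V : Type} [Fintype V] [DecidableEq V] (G : SimpleGraph V)
    (hG : G.Connected) (hn : 2 ≤ Fintype.card V) :
    ∃ D : RTD V G,
      (∀ t, CliqueSepFreeOn G (D.bag t)) ∧
      (∀ t, t ≠ D.root → G.IsClique (↑(D.bag t ∩ D.bag (D.parent t)) : Set V)) ∧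
      Nat.card D.ι ≤ Fintype.card V - 1 := by
  classical
  -- G has an edge
  obtain ⟨x, y, hxy⟩ : ∃ x y : V, G.Adj x y := by
    obtain ⟨x, y, hne⟩ := Fintype.exists_pair_of_one_lt_card (α := V) (by omega)
    obtain ⟨w⟩ := hG.preconnected x y
    cases w with
    | nil => exact absurd rfl hne
    | cons h p => exact ⟨_, _, h⟩
  set C : Finset V := {x, y} with hCdef
  have hCcl : G.IsClique (↑C : Set V) := by
    rw [hCdef, Finset.coe_insert, Finset.coe_singleton]
    exact SimpleGraph.isClique_pair.mpr (fun _ => hxy)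
  obtain ⟨D0⟩ := core_exists G (Fintype.card V) Finset.univ C
    (by rw [Finset.card_univ]) (Finset.subset_univ C) hCcl
  obtain ⟨D, hD⟩ := core_prune G Finset.univ C D0.m D0 le_rfl
  have hparm : ∀ t : ℕ, t < D.m → D.par t < D.m := by
    intro t ht
    rcases Nat.eq_zero_or_pos t with rfl | h0
    · rw [D.par0]; exact ht
    · exact lt_trans (D.parlt t h0 ht) ht
  -- the rooted tree decomposition
  set parent : Fin D.m → Fin D.m := fun t => ⟨D.par t.1, hparm t.1 t.2⟩ with hparent
  set root : Fin D.m := ⟨0, D.hm⟩ with hroot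
  have hreach : ∀ (k : ℕ) (t : Fin D.m), t.1 ≤ k → ∃ n, parent^[n] t = root := by
    intro k
    induction k with
    | zero =>
      intro t ht
      exact ⟨0, by rw [Function.iterate_zero_apply]; exact Fin.ext (by simp only [hroot]; omega)⟩
    | succ k ih =>
      intro t ht
      rcases Nat.eq_zero_or_pos t.1 with h0 | h0
      · exact ⟨0, by rw [Function.iterate_zero_apply]; exact Fin.ext (by simp only [hroot]; omega)⟩
      · have hlt : D.par t.1 < t.1 := D.parlt t.1 h0 t.2
        obtain ⟨n, hn⟩ := ih (parent t) (by simp only [hparent]; omega)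
        exact ⟨n + 1, by rw [Function.iterate_succ_apply]; exact hn⟩
  refine ⟨{ ι := Fin D.m
            instFintype := inferInstance
            instDecEq := inferInstance
            root := root
            parent := parent
            parent_root := Fin.ext (by simpa [hparent, hroot] using D.par0)
            reaches_root := fun t => hreach t.1 t le_rfl
            bag := fun t => D.bag t.1
            bag_subset := fun t => Finset.subset_univ _
            bags_connected := ?_
            edge_in_bag := ?_ }, fun t => D.csf t.1 t.2, ?_, ?_⟩
  · -- bags_connected
    intro v hv
    obtain ⟨t₀, ht₀m, ht₀, hcl⟩ := D.conn v (Finset.mem_univ v)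
    set Sv : Set (Fin D.m) := {t | v ∈ D.bag t.1} with hSv
    set H : SimpleGraph (Fin D.m) := SimpleGraph.fromRel fun s t => parent s = t with hH
    set r₀ : ↥Sv := ⟨⟨t₀, ht₀m⟩, ht₀⟩ with hr₀
    have hstep : ∀ (k : ℕ) (u : ↥Sv), u.1.1 ≤ k → (H.induce Sv).Reachable u r₀ := by
      intro k
      induction k with
      | zero =>
        intro u hu
        rcases hcl u.1.1 u.1.2 u.2 with h | ⟨h, -⟩
        · rw [show u = r₀ from Subtype.ext (Fin.ext h)]
        · omega
      | succ k ih =>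
        intro u hu
        by_cases he : u.1.1 = t₀
        · have : u = r₀ := Subtype.ext (Fin.ext he)
          rw [this]
        · rcases hcl u.1.1 u.1.2 u.2 with h | ⟨h0, hp⟩
          · exact absurd h he
          · have hlt : D.par u.1.1 < u.1.1 := D.parlt u.1.1 h0 u.1.2
            have hmem : parent u.1 ∈ Sv := by simpa [hSv, hparent] using hp
            have hadj : (H.induce Sv).Adj u ⟨parent u.1, hmem⟩ := by
              refine ⟨?_, Or.inl rfl⟩
              intro heq
              have : u.1.1 = D.par u.1.1 := by
                have := congrArg Fin.val heq
                simpa [hparent] using this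
              omega
            exact hadj.reachable.trans (ih ⟨parent u.1, hmem⟩ (by simp only [hparent]; omega))
    rw [SimpleGraph.connected_iff]
    refine ⟨fun a b => (hstep a.1.1 a le_rfl).trans (hstep b.1.1 b le_rfl).symm, ⟨r₀⟩⟩
  · -- edge_in_bag
    intro u hu w hw hadj
    have hcl : G.IsClique (↑({u, w} : Finset V) : Set V) := by
      rw [Finset.coe_insert, Finset.coe_singleton]
      exact SimpleGraph.isClique_pair.mpr (fun _ => hadj)
    obtain ⟨t, htm, hKt⟩ := D.cib {u, w} (Finset.subset_univ _) hcl
    exact ⟨⟨t, htm⟩, hKt (Finset.mem_insert_self u _),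
      hKt (Finset.mem_insert_of_mem (Finset.mem_singleton_self w))⟩
  · -- adhesions are cliques
    intro t htroot
    have h0 : 0 < t.1 := by
      rcases Nat.eq_zero_or_pos t.1 with h | h
      · exact absurd (Fin.ext h) htroot
      · exact h
    exact D.adh t.1 h0 t.2
  · -- node count
    rw [Nat.card_eq_fintype_card, Fintype.card_fin]
    set parts : ℕ → Finset V := fun t =>
      if t = 0 then D.bag 0 else D.bag t \ D.bag (D.par t) with hparts
    have hkey : ∀ v, ∀ s, s < D.m → v ∈ parts s →
        ∀ u, u < D.m → v ∈ parts u → s = u := by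
      intro v s hs hvs u hum hvu
      obtain ⟨t₀, ht₀m, ht₀, hcl⟩ := D.conn v (Finset.mem_univ v)
      have claim : ∀ w, w < D.m → v ∈ parts w → w = t₀ := by
        intro w hwm hvw
        by_cases hw0 : w = 0
        · subst hw0
          rw [hparts] at hvw
          simp only [if_pos rfl] at hvw
          rcases hcl 0 hwm hvw with h | ⟨h, -⟩
          · exact h
          · omega
        · rw [hparts] at hvw
          simp only [if_neg hw0] at hvw
          rw [Finset.mem_sdiff] at hvw
          rcases hcl w hwm hvw.1 with h | ⟨-, hp⟩
          · exact h
          · exact absurd hp hvw.2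
      rw [claim s hs hvs, claim u hum hvu]
    have hdisj : ∀ t ∈ Finset.range D.m, ∀ u ∈ Finset.range D.m, t ≠ u →
        Disjoint (parts t) (parts u) := by
      intro t ht u hu hne
      rw [Finset.mem_range] at ht hu
      rw [Finset.disjoint_left]
      intro v hvt hvu
      exact hne (hkey v t ht hvt u hu hvu)
    have hcard : ∑ t ∈ Finset.range D.m, (parts t).card ≤ Fintype.card V := by
      rw [← Finset.card_biUnion hdisj]
      exact Finset.card_le_univ _
    have h0m : (0 : ℕ) ∈ Finset.range D.m := Finset.mem_range.mpr D.hm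
    have hsplit := Finset.sum_eq_sum_sdiff_singleton_add h0m (fun t => (parts t).card)
    have hparts0 : parts 0 = D.bag 0 := by simp [hparts]
    have h2 : 2 ≤ (parts 0).card := by
      have hsub : C ⊆ parts 0 := by rw [hparts0]; exact D.rootC
      have hC2 : C.card = 2 := Finset.card_pair hxy.ne
      have := Finset.card_le_card hsub
      omega
    have h1 : ∀ t ∈ Finset.range D.m \ {0}, 1 ≤ (parts t).card := by
      intro t ht
      rw [Finset.mem_sdiff, Finset.mem_range, Finset.mem_singleton] at ht
      have hne : ¬ D.bag t ⊆ D.bag (D.par t) := hD t (by omega) ht.1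
      have : parts t = D.bag t \ D.bag (D.par t) := by simp [hparts, ht.2]
      rw [this]
      have := Finset.card_pos.mpr (Finset.sdiff_nonempty.mpr hne)
      omega
    have hlow := Finset.card_nsmul_le_sum (Finset.range D.m \ {0}) (fun t => (parts t).card) 1 h1
    have hcard0 : (Finset.range D.m \ {0}).card = D.m - 1 := by
      rw [Finset.card_sdiff_of_subset (by simpa using D.hm)]
      simp
    rw [hcard0, smul_eq_mul, mul_one] at hlow
    omega


/-- Every finite connected graph on `n ≥ 2` vertices admits a rooted tree
decomposition whose bags induce clique-separator-free subgraphs, whose adhesions are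
cliques, and which has at most `n − 1` nodes (clique minimal separator decomposition). -/
theorem stmt17 {V : Type} [Fintype V] [DecidableEq V] (G : SimpleGraph V)
    (hG : G.Connected) (hn : 2 ≤ Fintype.card V) :
    ∃ D : RTD V G,
      (∀ t, CliqueSepFreeOn G (D.bag t)) ∧
      (∀ t, t ≠ D.root → G.IsClique (↑(D.bag t ∩ D.bag (D.parent t)) : Set V)) ∧
      Nat.card D.ι ≤ Fintype.card V - 1 := by
  exact stmt17' G hG hn
end

section
/- Let G be a finite graph and let (T*,β*) be a rooted tree decomposition of G such that every adhesion σ*(t) = β*(t) ∩ β*(parent(t)) is a clique in G, and every adhesion has size at most a. Suppose that for every node t of T*, the induced subgraph G[β*(t)] admits a rooted tree decomposition of width at most w and adhesion width at most ℓ, where a ≤ ℓ. Then G admits a rooted tree decomposition of width at most w and adhesion width at most ℓ, each of whose bags is a bag of one of the given per-node decompositions. -/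
open Classical in
/-- Depth of a node in a rooted tree given by a parent function. -/
noncomputable def tdepth {ι : Type} (parent : ι → ι) (root : ι)
    (hreach : ∀ t, ∃ n, parent^[n] t = root) (t : ι) : ℕ :=
  Nat.find (hreach t)

section Tree

variable {ι : Type} {parent : ι → ι} {root : ι}

lemma tdepth_spec (hreach : ∀ t, ∃ n, parent^[n] t = root) (t : ι) :
    parent^[tdepth parent root hreach t] t = root := by
  classical
  exact Nat.find_spec (hreach t)

lemma tdepth_le (hreach : ∀ t, ∃ n, parent^[n] t = root) {t : ι} {n : ℕ}
    (h : parent^[n] t = root) : tdepth parent root hreach t ≤ n := by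
  classical
  exact Nat.find_le h

lemma eq_root_of_tdepth_eq_zero (hreach : ∀ t, ∃ n, parent^[n] t = root) {t : ι}
    (h : tdepth parent root hreach t = 0) : t = root := by
  have := tdepth_spec hreach t
  rwa [h] at this

lemma tdepth_root (hreach : ∀ t, ∃ n, parent^[n] t = root) :
    tdepth parent root hreach root = 0 :=
  Nat.le_zero.mp (tdepth_le hreach (by simp))

lemma eq_root_of_parent_fix (hreach : ∀ t, ∃ n, parent^[n] t = root) {t : ι}
    (h : parent t = t) : t = root := by
  have h2 := tdepth_spec hreach t
  rwa [Function.iterate_fixed h] at h2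

lemma tdepth_parent (hreach : ∀ t, ∃ n, parent^[n] t = root) {t : ι} (h : t ≠ root) :
    tdepth parent root hreach t = tdepth parent root hreach (parent t) + 1 := by
  have hpos : tdepth parent root hreach t ≠ 0 := fun h0 => h (eq_root_of_tdepth_eq_zero hreach h0)
  have h1 : tdepth parent root hreach t ≤ tdepth parent root hreach (parent t) + 1 := by
    apply tdepth_le hreach
    rw [Function.iterate_succ_apply]
    exact tdepth_spec hreach (parent t)
  have h2 : tdepth parent root hreach (parent t) ≤ tdepth parent root hreach t - 1 := by
    apply tdepth_le hreach
    have := tdepth_spec hreach t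
    rwa [← Nat.succ_pred_eq_of_pos (Nat.pos_of_ne_zero hpos), Function.iterate_succ_apply] at this
  omega

lemma eq_root_of_cycle (hroot : parent root = root)
    (hreach : ∀ t, ∃ n, parent^[n] t = root) {t : ι} {k : ℕ}
    (hk : 0 < k) (h : parent^[k] t = t) : t = root := by
  set d := tdepth parent root hreach t with hd
  have hmul : parent^[k * d] t = t := by
    rw [Function.iterate_mul]
    exact Function.iterate_fixed h d
  have hdle : d ≤ k * d := Nat.le_mul_of_pos_left d hk
  have hsplit : parent^[k * d] t = parent^[k * d - d] (parent^[d] t) := by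
    rw [← Function.iterate_add_apply]
    congr 1
    omega
  rw [hsplit, hd, tdepth_spec hreach t, Function.iterate_fixed hroot] at hmul
  exact hmul.symm

/-- Walk lemma: in a connected set `S`, starting at `x`, the ancestor chain of `x`
down to the depth of a minimum-depth element `m` of `S` stays in `S` and ends at `m`. -/
lemma walk_lemma (hroot : parent root = root) (hreach : ∀ t, ∃ n, parent^[n] t = root)
    {S : Set ι} {m : ι} (hm : m ∈ S)
    (hmin : ∀ z ∈ S, tdepth parent root hreach m ≤ tdepth parent root hreach z)
    {x : ι} (hx : x ∈ S)
    (h : ((SimpleGraph.fromRel fun s t => parent s = t).induce S).Reachable ⟨x, hx⟩ ⟨m, hm⟩) :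
    (∀ k ≤ tdepth parent root hreach x - tdepth parent root hreach m, parent^[k] x ∈ S) ∧
      parent^[tdepth parent root hreach x - tdepth parent root hreach m] x = m := by
  set dep := tdepth parent root hreach with hdep
  suffices H : ∀ (a b : ↥S)
      (_ : ((SimpleGraph.fromRel fun s t => parent s = t).induce S).Walk a b),
      (∀ z ∈ S, dep b.1 ≤ dep z) →
      (∀ k ≤ dep a.1 - dep b.1, parent^[k] a.1 ∈ S) ∧
        parent^[dep a.1 - dep b.1] a.1 = b.1 by
    obtain ⟨p⟩ := h
    exact H ⟨x, hx⟩ ⟨m, hm⟩ p hmin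
  intro a b p
  induction p with
  | @nil u =>
    intro _
    refine ⟨?_, by simp⟩
    intro k hk
    simp only [Nat.sub_self, Nat.le_zero] at hk
    subst hk
    exact u.2
  | @cons u v w huv q ih =>
    intro hminw
    have ihp := ih hminw
    have hadj : u.1 ≠ v.1 ∧ (parent u.1 = v.1 ∨ parent v.1 = u.1) := by
      have := huv
      simp only [SimpleGraph.comap_adj, SimpleGraph.fromRel_adj] at this
      exact this
    obtain ⟨hne, hor⟩ := hadj
    have hvS : v.1 ∈ S := v.2
    have huS : u.1 ∈ S := u.2
    have hmv : dep w.1 ≤ dep v.1 := hminw _ hvS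
    have hmu : dep w.1 ≤ dep u.1 := hminw _ huS
    rcases hor with h1 | h1
    · -- parent u = v
      have hunr : u.1 ≠ root := by
        intro hu
        apply hne
        rw [hu, ← h1, hu, hroot]
      have hdu : dep u.1 = dep v.1 + 1 := by
        rw [hdep, tdepth_parent hreach hunr, h1]
      have harith : dep u.1 - dep w.1 = (dep v.1 - dep w.1) + 1 := by omega
      constructor
      · intro k hk
        match k with
        | 0 => simp only [Function.iterate_zero, id_eq]; exact huS
        | (j+1) =>
          rw [Function.iterate_succ_apply, h1]
          exact ihp.1 j (by omega)
      · rw [harith, Function.iterate_succ_apply, h1]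
        exact ihp.2
    · -- parent v = u
      have hvnr : v.1 ≠ root := by
        intro hv
        apply hne
        rw [hv, ← h1, hv, hroot]
      have hdv : dep v.1 = dep u.1 + 1 := by
        rw [hdep, tdepth_parent hreach hvnr, h1]
      have harith : dep v.1 - dep w.1 = (dep u.1 - dep w.1) + 1 := by omega
      constructor
      · intro k hk
        have hh : parent^[k] u.1 = parent^[k+1] v.1 := by
          rw [Function.iterate_succ_apply, h1]
        rw [hh]
        exact ihp.1 (k+1) (by omega)
      · have hh : parent^[dep u.1 - dep w.1] u.1 = parent^[dep v.1 - dep w.1] v.1 := by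
          rw [harith, Function.iterate_succ_apply, h1]
        rw [hh]
        exact ihp.2

end Tree

section Reroot
open scoped Classical

open Classical in
/-- Re-root a parent-function tree at `r`. -/
noncomputable def reroot {ι : Type} (parent : ι → ι) (r : ι) (t : ι) : ι :=
  if t = r then r
  else if h : ∃ k, parent^[k] r = t then parent^[Nat.find h - 1] r
  else parent t

variable {ι : Type} {parent : ι → ι} {root : ι} {r : ι}

lemma reroot_fix : reroot parent r r = r := by
  rw [reroot, if_pos rfl]

lemma find_pos {t : ι} (ht : t ≠ r) (h : ∃ k, parent^[k] r = t) :
    0 < Nat.find h := by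
  rcases Nat.eq_zero_or_pos (Nat.find h) with h0 | h0
  · exfalso
    have := Nat.find_spec h
    rw [h0] at this
    exact ht this.symm
  · exact h0

/-- On-path description of reroot. -/
lemma reroot_path {t : ι} (ht : t ≠ r) (h : ∃ k, parent^[k] r = t) :
    parent (reroot parent r t) = t := by
  classical
  rw [reroot, if_neg ht, dif_pos h]
  have hpos : 0 < Nat.find h := find_pos ht h
  rw [← Function.iterate_succ_apply' parent]
  have h2 : Nat.find h - 1 + 1 = Nat.find h := by omega
  rw [Nat.succ_eq_add_one, h2]
  exact Nat.find_spec h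

lemma reroot_offpath {t : ι} (ht : t ≠ r) (h : ¬ ∃ k, parent^[k] r = t) :
    reroot parent r t = parent t := by
  classical
  rw [reroot, if_neg ht, dif_neg h]

/-- (A): every rerooted edge is an old edge. -/
lemma reroot_edge {t : ι} (ht : t ≠ r) :
    parent t = reroot parent r t ∨ parent (reroot parent r t) = t := by
  classical
  by_cases h : ∃ k, parent^[k] r = t
  · exact Or.inr (reroot_path ht h)
  · rw [reroot_offpath ht h]
    exact Or.inl rfl

lemma reroot_ne (hroot : parent root = root) (hreach : ∀ t, ∃ n, parent^[n] t = root)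
    {t : ι} (ht : t ≠ r) : reroot parent r t ≠ t := by
  classical
  by_cases h : ∃ k, parent^[k] r = t
  · intro heq
    -- reroot t = c_{K-1} = t contradicts minimality of K
    rw [reroot, if_neg ht, dif_pos h] at heq
    have hpos : 0 < Nat.find h := find_pos ht h
    exact Nat.find_min h (m := Nat.find h - 1) (by omega) heq
  · rw [reroot_offpath ht h]
    intro heq
    apply h
    have h3 : t = root := eq_root_of_parent_fix hreach heq
    refine ⟨tdepth parent root hreach r, ?_⟩
    rw [h3]
    exact tdepth_spec hreach r

/-- (B): every old edge is a rerooted edge. -/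
lemma reroot_edge_rev (hroot : parent root = root) (hreach : ∀ t, ∃ n, parent^[n] t = root)
    {x y : ι} (hxy : x ≠ y) (h : parent x = y) :
    reroot parent r x = y ∨ reroot parent r y = x := by
  classical
  have hxroot : x ≠ root := by
    intro hx; apply hxy; rw [← h, hx, hroot]
  by_cases hxr : x = r
  · -- y = parent r = c_1
    subst hxr
    right
    have hy1 : parent^[1] x = y := by simpa using h
    have hyp : ∃ k, parent^[k] x = y := ⟨1, hy1⟩
    have hynr : y ≠ x := hxy.symm
    rw [reroot, if_neg hynr, dif_pos hyp]
    have hfind : Nat.find hyp = 1 := by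
      have hle : Nat.find hyp ≤ 1 := Nat.find_le hy1
      have hpos : 0 < Nat.find hyp := find_pos hynr hyp
      omega
    rw [hfind]
    simp
  · by_cases hx : ∃ k, parent^[k] r = x
    · -- x on path; the edge is reversed: reroot y = x
      right
      set K := Nat.find hx with hK
      have hcK : parent^[K] r = x := Nat.find_spec hx
      have hcK1 : parent^[K+1] r = y := by
        rw [Function.iterate_succ_apply', hcK, h]
      have hyr : y ≠ r := by
        intro hyr0
        -- then c_{K+1} = r = c_0: cycle, so r = root, chain constant root, x = root
        have hcyc : parent^[K+1] r = r := by rw [hcK1, hyr0]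
        have hrr : r = root := eq_root_of_cycle hroot hreach (k := K+1) (by omega) hcyc
        have hx0 : x = root := by
          rw [← hcK, hrr, Function.iterate_fixed hroot]
        exact hxroot hx0
      have hy : ∃ k, parent^[k] r = y := ⟨K+1, hcK1⟩
      rw [reroot, if_neg hyr, dif_pos hy]
      have hfind : Nat.find hy = K + 1 := by
        have hle : Nat.find hy ≤ K + 1 := Nat.find_le hcK1
        rcases Nat.lt_or_ge (Nat.find hy) (K+1) with hlt | hge
        · exfalso
          -- c_J = y = c_{K+1} with J < K+1 : cycle at c_J
          set J := Nat.find hy with hJ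
          have hcJ : parent^[J] r = y := Nat.find_spec hy
          have hcyc : parent^[K+1-J] (parent^[J] r) = parent^[J] r := by
            rw [← Function.iterate_add_apply]
            have : K + 1 - J + J = K + 1 := by omega
            rw [this, hcK1, hcJ]
          have hyroot : y = root := by
            rw [← hcJ]
            exact eq_root_of_cycle hroot hreach (by omega) hcyc
          -- chain constant root from J on; x = c_K with K ≥ J
          have hxr2 : x = root := by
            rw [← hcK]
            have : parent^[K] r = parent^[K-J] (parent^[J] r) := by
              rw [← Function.iterate_add_apply]
              congr 1
              omega
            rw [this, hcJ, hyroot, Function.iterate_fixed hroot]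
          exact hxroot hxr2
        · omega
      rw [hfind]
      simpa using hcK
    · -- x off path
      left
      exact reroot_offpath hxr hx ▸ h

/-- Graph equality: the rerooted tree has the same underlying graph. -/
lemma reroot_graph_eq (hroot : parent root = root) (hreach : ∀ t, ∃ n, parent^[n] t = root) :
    (SimpleGraph.fromRel fun s t => reroot parent r s = t)
      = SimpleGraph.fromRel fun s t => parent s = t := by
  ext x y
  simp only [SimpleGraph.fromRel_adj]
  constructor
  · rintro ⟨hne, h | h⟩
    · refine ⟨hne, ?_⟩
      have hxr : x ≠ r := by
        intro hx; subst hx; rw [reroot_fix] at h; exact hne h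
      rcases reroot_edge (parent := parent) hxr with h1 | h1
      · exact Or.inl (h ▸ h1)
      · exact Or.inr (h ▸ h1)
    · refine ⟨hne, ?_⟩
      have hyr : y ≠ r := by
        intro hy; subst hy; rw [reroot_fix] at h; exact hne h.symm
      rcases reroot_edge (parent := parent) hyr with h1 | h1
      · exact Or.inr (h ▸ h1)
      · exact Or.inl (h ▸ h1)
  · rintro ⟨hne, h | h⟩
    · exact ⟨hne, reroot_edge_rev hroot hreach hne h⟩
    · rcases reroot_edge_rev hroot hreach hne.symm h with h1 | h1
      · exact ⟨hne, Or.inr h1⟩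
      · exact ⟨hne, Or.inl h1⟩

/-- (D): every node reaches `r` under the rerooted parent map. -/
lemma reroot_reaches (hroot : parent root = root) (hreach : ∀ t, ∃ n, parent^[n] t = root)
    (t : ι) : ∃ n, (reroot parent r)^[n] t = r := by
  classical
  -- step 1: on-path nodes reach r
  have L1 : ∀ K k (t : ι), k ≤ K → parent^[k] r = t → ∃ n, (reroot parent r)^[n] t = r := by
    intro K
    induction K with
    | zero =>
      intro k t hk h
      interval_cases k
      exact ⟨0, by simpa using h.symm ▸ rfl⟩
    | succ K ih =>
      intro k t hk h
      by_cases htr : t = r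
      · exact ⟨0, by simp [htr]⟩
      · have hpath : ∃ j, parent^[j] r = t := ⟨k, h⟩
        have hkpos : 0 < k := by
          rcases Nat.eq_zero_or_pos k with h0 | h0
          · exfalso; apply htr; rw [← h, h0]; simp
          · exact h0
        set J := Nat.find hpath with hJ
        have hJle : J ≤ k := Nat.find_le h
        have hJpos : 0 < J := find_pos htr hpath
        have hre : reroot parent r t = parent^[J-1] r := by
          rw [reroot, if_neg htr, dif_pos hpath]
        obtain ⟨n, hn⟩ := ih (J-1) (parent^[J-1] r) (by omega) rfl
        exact ⟨n + 1, by rw [Function.iterate_succ_apply, hre, hn]⟩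
  -- step 2: all nodes
  suffices H : ∀ d (t : ι), tdepth parent root hreach t ≤ d → ∃ n, (reroot parent r)^[n] t = r by
    exact H _ t le_rfl
  intro d
  induction d with
  | zero =>
    intro t hd
    have h3 : t = root := eq_root_of_tdepth_eq_zero hreach (Nat.le_zero.mp hd)
    exact L1 _ _ t le_rfl (by rw [h3]; exact tdepth_spec hreach r)
  | succ d ih =>
    intro t hd
    by_cases hpath : ∃ k, parent^[k] r = t
    · obtain ⟨k, hk⟩ := hpath
      exact L1 k k t le_rfl hk
    · have htr : t ≠ r := by
        intro h; exact hpath ⟨0, by simp [h]⟩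
      have htroot : t ≠ root := by
        intro h; exact hpath ⟨tdepth parent root hreach r, by rw [tdepth_spec hreach r, h]⟩
      have hre : reroot parent r t = parent t := reroot_offpath htr hpath
      have hdp : tdepth parent root hreach (parent t) ≤ d := by
        have := tdepth_parent hreach htroot (parent := parent)
        omega
      obtain ⟨n, hn⟩ := ih (parent t) hdp
      exact ⟨n + 1, by rw [Function.iterate_succ_apply, hre, hn]⟩

end Reroot


section Helly

variable {V : Type} [Fintype V] [DecidableEq V] {G : SimpleGraph V} {W : Finset V}

/-- Helly property: a set of vertices that pairwise share bags lies in a common bag. -/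
lemma RTDOn.helly (D : RTDOn V G W) (K : Finset V) (hKW : K ⊆ W)
    (hpair : ∀ u ∈ K, ∀ v ∈ K, u ≠ v → ∃ s, u ∈ D.bag s ∧ v ∈ D.bag s) :
    ∃ s, K ⊆ D.bag s := by
  classical
  rcases K.eq_empty_or_nonempty with hK | hK
  · exact ⟨D.root, by simp [hK]⟩
  set dep := tdepth D.parent D.root D.reaches_root with hdep
  have hne : ∀ v ∈ K, ∃ mv, v ∈ D.bag mv ∧ ∀ z, v ∈ D.bag z → dep mv ≤ dep z := by
    intro v hv
    have hconn := D.bags_connected v (hKW hv)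
    obtain ⟨⟨s0, hs0⟩⟩ := hconn.nonempty
    have hfil : (Finset.univ.filter fun s => v ∈ D.bag s).Nonempty :=
      ⟨s0, by simpa using hs0⟩
    obtain ⟨mv, hmv, hmin⟩ := Finset.exists_min_image _ dep hfil
    refine ⟨mv, by simpa using hmv, ?_⟩
    intro z hz
    exact hmin z (by simpa using hz)
  choose mv hmv1 hmv2 using hne
  obtain ⟨v0p, _, hmax⟩ := K.attach.exists_max_image (fun p => dep (mv p.1 p.2))
    (by simpa using hK)
  obtain ⟨v0, hv0⟩ := v0p
  refine ⟨mv v0 hv0, fun v hv => ?_⟩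
  by_cases hvv : v = v0
  · subst hvv; exact hmv1 v hv
  obtain ⟨x, hx1, hx2⟩ := hpair v hv v0 hv0 hvv
  have hroot' : D.parent D.root = D.root := D.parent_root
  -- min-depth facts
  have hminv : ∀ z ∈ {s | v ∈ D.bag s}, dep (mv v hv) ≤ dep z := fun z hz => hmv2 v hv z hz
  have hminv0 : ∀ z ∈ {s | v0 ∈ D.bag s}, dep (mv v0 hv0) ≤ dep z := fun z hz => hmv2 v0 hv0 z hz
  have hreachv : ((SimpleGraph.fromRel fun s t => D.parent s = t).induce
      {s | v ∈ D.bag s}).Reachable ⟨x, hx1⟩ ⟨mv v hv, hmv1 v hv⟩ :=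
    (D.bags_connected v (hKW hv)).preconnected _ _
  have hreachv0 : ((SimpleGraph.fromRel fun s t => D.parent s = t).induce
      {s | v0 ∈ D.bag s}).Reachable ⟨x, hx2⟩ ⟨mv v0 hv0, hmv1 v0 hv0⟩ :=
    (D.bags_connected v0 (hKW hv0)).preconnected _ _
  have W1 := walk_lemma hroot' D.reaches_root (hmv1 v hv) hminv hx1 hreachv
  have W2 := walk_lemma hroot' D.reaches_root (hmv1 v0 hv0) hminv0 hx2 hreachv0
  have hle : dep (mv v hv) ≤ dep (mv v0 hv0) := hmax ⟨v, hv⟩ (Finset.mem_attach _ _)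
  have hkey : D.parent^[dep x - dep (mv v0 hv0)] x ∈ {s | v ∈ D.bag s} :=
    W1.1 _ (Nat.sub_le_sub_left hle _)
  rw [W2.2] at hkey
  exact hkey

end Helly



/-- Given a rooted tree decomposition `D*` of `G` whose adhesions are
cliques of size at most `a ≤ ℓ`, and for each node `t` a rooted tree decomposition of
`G[β*(t)]` of width at most `w` and adhesion width at most `ℓ`, the graph `G` admits a
rooted tree decomposition of width at most `w` and adhesion width at most `ℓ` whose
bags all come from the given per-node decompositions. -/
theorem stmt19 {V : Type} [Fintype V] [DecidableEq V] (G : SimpleGraph V)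
    (a w l : ℕ) (hal : a ≤ l)
    (Dstar : RTD V G)
    (hclq : ∀ t, t ≠ Dstar.root →
      G.IsClique (↑(Dstar.bag t ∩ Dstar.bag (Dstar.parent t)) : Set V))
    (hadh : Dstar.adhesionLe a)
    (Dloc : ∀ t : Dstar.ι, RTDOn V G (Dstar.bag t))
    (hlw : ∀ t, (Dloc t).widthLe w) (hla : ∀ t, (Dloc t).adhesionLe l) :
    ∃ D : RTD V G, D.widthLe w ∧ D.adhesionLe l ∧
      ∀ s : D.ι, ∃ (t : Dstar.ι) (s' : (Dloc t).ι), D.bag s = (Dloc t).bag s' := by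
  classical
  -- Helly choices: a bag of `Dloc t` containing `σ*(t)`, and one of `Dloc (parent t)`.
  have hm : ∀ t : Dstar.ι, ∃ s : (Dloc t).ι, Dstar.sigmaBag t ⊆ (Dloc t).bag s := by
    intro t
    apply (Dloc t).helly
    · rw [RTDOn.sigmaBag]
      split
      · exact Finset.empty_subset _
      · exact Finset.inter_subset_left
    · intro u hu v hv huv
      have ht : t ≠ Dstar.root := by
        intro h
        rw [RTDOn.sigmaBag, if_pos h] at hu
        simp at hu
      rw [RTDOn.sigmaBag, if_neg ht] at hu hv
      have hadj : G.Adj u v :=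
        hclq t ht (Finset.mem_coe.mpr hu) (Finset.mem_coe.mpr hv) huv
      exact (Dloc t).edge_in_bag u (Finset.mem_of_mem_inter_left hu) v
        (Finset.mem_of_mem_inter_left hv) hadj
  choose m hmσ using hm
  have hs'ex : ∀ t : Dstar.ι, ∃ s : (Dloc (Dstar.parent t)).ι,
      Dstar.sigmaBag t ⊆ (Dloc (Dstar.parent t)).bag s := by
    intro t
    apply (Dloc (Dstar.parent t)).helly
    · rw [RTDOn.sigmaBag]
      split
      · exact Finset.empty_subset _
      · exact Finset.inter_subset_right
    · intro u hu v hv huv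
      have ht : t ≠ Dstar.root := by
        intro h
        rw [RTDOn.sigmaBag, if_pos h] at hu
        simp at hu
      rw [RTDOn.sigmaBag, if_neg ht] at hu hv
      have hadj : G.Adj u v :=
        hclq t ht (Finset.mem_coe.mpr hu) (Finset.mem_coe.mpr hv) huv
      exact (Dloc (Dstar.parent t)).edge_in_bag u (Finset.mem_of_mem_inter_right hu) v
        (Finset.mem_of_mem_inter_right hv) hadj
  choose s' hs'σ using hs'ex
  -- rerooted local parent maps and the glued parent map
  set p : ∀ t : Dstar.ι, (Dloc t).ι → (Dloc t).ι :=
    fun t => reroot (Dloc t).parent (m t) with hp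
  set P : (Σ t : Dstar.ι, (Dloc t).ι) → (Σ t : Dstar.ι, (Dloc t).ι) := fun x =>
    if x.2 = m x.1 then
      (if x.1 = Dstar.root then x else ⟨Dstar.parent x.1, s' x.1⟩)
    else ⟨x.1, p x.1 x.2⟩ with hP
  have hP1 : ∀ (t : Dstar.ι) (s : (Dloc t).ι), s ≠ m t → P ⟨t, s⟩ = ⟨t, p t s⟩ := by
    intro t s h
    simp only [hP]
    rw [if_neg h]
  have hP2 : ∀ t : Dstar.ι, t ≠ Dstar.root → P ⟨t, m t⟩ = ⟨Dstar.parent t, s' t⟩ := by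
    intro t h
    simp only [hP]
    simp [h]
  have hP3 : P ⟨Dstar.root, m Dstar.root⟩ = ⟨Dstar.root, m Dstar.root⟩ := by
    simp only [hP]
    simp
  have hsig_ne : ∀ (t : Dstar.ι) (a b : (Dloc t).ι), a ≠ b →
      (⟨t, a⟩ : Σ t, (Dloc t).ι) ≠ ⟨t, b⟩ := by
    intro t a b h heq
    apply h
    simpa using heq
  have hpfix : ∀ t : Dstar.ι, p t (m t) = m t := fun t => reroot_fix
  -- reach the local rerooted root within a component
  have hreach1 : ∀ (t : Dstar.ι) (s : (Dloc t).ι), ∃ k, P^[k] ⟨t, s⟩ = ⟨t, m t⟩ := by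
    intro t s
    obtain ⟨n, hn⟩ := reroot_reaches (r := m t) (Dloc t).parent_root (Dloc t).reaches_root s
    clear hn
    have H : ∀ (n : ℕ) (s : (Dloc t).ι), (p t)^[n] s = m t →
        ∃ k, P^[k] ⟨t, s⟩ = ⟨t, m t⟩ := by
      intro n
      induction n with
      | zero =>
        intro s hs
        exact ⟨0, by simp only [Function.iterate_zero, id_eq] at hs ⊢; rw [hs]⟩
      | succ n ih =>
        intro s hs
        by_cases h : s = m t
        · exact ⟨0, by rw [h]; rfl⟩
        · obtain ⟨k, hk⟩ := ih (p t s) (by rwa [Function.iterate_succ_apply] at hs)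
          exact ⟨k + 1, by rw [Function.iterate_succ_apply, hP1 t s h, hk]⟩
    obtain ⟨n, hn⟩ := reroot_reaches (r := m t) (Dloc t).parent_root (Dloc t).reaches_root s
    exact H n s hn
  have hreach2 : ∀ t : Dstar.ι, ∃ k,
      P^[k] ⟨t, m t⟩ = (⟨Dstar.root, m Dstar.root⟩ : Σ t, (Dloc t).ι) := by
    suffices H : ∀ (d : ℕ) (t : Dstar.ι), tdepth Dstar.parent Dstar.root Dstar.reaches_root t ≤ d →
        ∃ k, P^[k] ⟨t, m t⟩ = (⟨Dstar.root, m Dstar.root⟩ : Σ t, (Dloc t).ι) by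
      exact fun t => H _ t le_rfl
    intro d
    induction d with
    | zero =>
      intro t hd
      have h3 : t = Dstar.root := eq_root_of_tdepth_eq_zero Dstar.reaches_root (Nat.le_zero.mp hd)
      subst h3
      exact ⟨0, rfl⟩
    | succ d ih =>
      intro t hd
      by_cases hroot : t = Dstar.root
      · subst hroot
        exact ⟨0, rfl⟩
      · obtain ⟨k1, hk1⟩ := hreach1 (Dstar.parent t) (s' t)
        obtain ⟨k2, hk2⟩ := ih (Dstar.parent t)
          (by have := tdepth_parent Dstar.reaches_root hroot; omega)
        refine ⟨k2 + (k1 + 1), ?_⟩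
        rw [Function.iterate_add_apply, Function.iterate_succ_apply, hP2 t hroot, hk1, hk2]
  have hREACH : ∀ x : Σ t : Dstar.ι, (Dloc t).ι,
      ∃ n, P^[n] x = (⟨Dstar.root, m Dstar.root⟩ : Σ t, (Dloc t).ι) := by
    intro x
    obtain ⟨t, s⟩ := x
    obtain ⟨k1, hk1⟩ := hreach1 t s
    obtain ⟨k2, hk2⟩ := hreach2 t
    exact ⟨k2 + k1, by rw [Function.iterate_add_apply, hk1, hk2]⟩
  -- width bound
  have hWIDTH : ∀ x : Σ t : Dstar.ι, (Dloc t).ι, ((Dloc x.1).bag x.2).card ≤ w + 1 :=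
    fun x => hlw x.1 x.2
  -- adhesion bound
  have hADH : ∀ x : Σ t : Dstar.ι, (Dloc t).ι,
      x ≠ (⟨Dstar.root, m Dstar.root⟩ : Σ t, (Dloc t).ι) →
      ((Dloc x.1).bag x.2 ∩ (Dloc (P x).1).bag (P x).2).card ≤ l := by
    intro x hx
    obtain ⟨t, s⟩ := x
    by_cases h : s = m t
    · subst h
      have ht : t ≠ Dstar.root := by
        intro h
        subst h
        exact hx rfl
      rw [hP2 t ht]
      have hsub : (Dloc t).bag (m t) ∩ (Dloc (Dstar.parent t)).bag (s' t) ⊆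
          Dstar.bag t ∩ Dstar.bag (Dstar.parent t) :=
        Finset.inter_subset_inter ((Dloc t).bag_subset (m t))
          ((Dloc (Dstar.parent t)).bag_subset (s' t))
      calc ((Dloc t).bag (m t) ∩ (Dloc (Dstar.parent t)).bag (s' t)).card
          ≤ (Dstar.bag t ∩ Dstar.bag (Dstar.parent t)).card := Finset.card_le_card hsub
        _ ≤ a := hadh t ht
        _ ≤ l := hal
    · rw [hP1 t s h]
      have hne : reroot (Dloc t).parent (m t) s ≠ s :=
        reroot_ne (Dloc t).parent_root (Dloc t).reaches_root h
      rcases reroot_edge (parent := (Dloc t).parent) (r := m t) h with h1 | h1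
      · -- (Dloc t).parent s = reroot ... s
        have hsroot : s ≠ (Dloc t).root := by
          intro hs
          apply hne
          rw [← h1, hs]
          exact (Dloc t).parent_root
        have h2 := hla t s hsroot
        rw [h1] at h2
        exact h2
      · -- (Dloc t).parent (reroot ... s) = s
        have hproot : reroot (Dloc t).parent (m t) s ≠ (Dloc t).root := by
          intro hs
          apply hne
          rw [hs]
          rw [hs, (Dloc t).parent_root] at h1
          exact h1
        have h2 := hla t (reroot (Dloc t).parent (m t) s) hproot
        rw [h1, Finset.inter_comm] at h2
        exact h2
  -- edges in bags
  have hEDGE : ∀ u ∈ (Finset.univ : Finset V), ∀ v ∈ (Finset.univ : Finset V), G.Adj u v →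
      ∃ x : Σ t : Dstar.ι, (Dloc t).ι, u ∈ (Dloc x.1).bag x.2 ∧ v ∈ (Dloc x.1).bag x.2 := by
    intro u _ v _ hadj
    obtain ⟨t, hu, hv⟩ := Dstar.edge_in_bag u (Finset.mem_univ u) v (Finset.mem_univ v) hadj
    obtain ⟨s, hs1, hs2⟩ := (Dloc t).edge_in_bag u hu v hv hadj
    exact ⟨⟨t, s⟩, hs1, hs2⟩
  -- connectivity of the occurrence sets
  have hCONN : ∀ v ∈ (Finset.univ : Finset V),
      ((SimpleGraph.fromRel fun x y => P x = y).induce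
        {x : Σ t : Dstar.ι, (Dloc t).ι | v ∈ (Dloc x.1).bag x.2}).Connected := by
    intro v _
    set Sv : Set (Σ t : Dstar.ι, (Dloc t).ι) := {x | v ∈ (Dloc x.1).bag x.2} with hSv
    set Ggl := (SimpleGraph.fromRel fun x y => P x = y).induce Sv with hGgl
    -- within-component reachability
    have C1 : ∀ (t : Dstar.ι) (s1 s2 : (Dloc t).ι) (h1 : v ∈ (Dloc t).bag s1)
        (h2 : v ∈ (Dloc t).bag s2),
        Ggl.Reachable ⟨⟨t, s1⟩, h1⟩ ⟨⟨t, s2⟩, h2⟩ := by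
      intro t s1 s2 h1 h2
      have hvt : v ∈ Dstar.bag t := (Dloc t).bag_subset s1 h1
      have hGeq := reroot_graph_eq (r := m t) (Dloc t).parent_root (Dloc t).reaches_root
      have hc := (Dloc t).bags_connected v hvt
      have Fadj : ∀ a b : {s : (Dloc t).ι // v ∈ (Dloc t).bag s},
          ((SimpleGraph.fromRel fun x y => (Dloc t).parent x = y).induce
            {s : (Dloc t).ι | v ∈ (Dloc t).bag s}).Adj a b →
          Ggl.Adj ⟨⟨t, a.1⟩, a.2⟩ ⟨⟨t, b.1⟩, b.2⟩ := by
        intro a b hab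
        simp only [SimpleGraph.comap_adj, Function.Embedding.coe_subtype] at hab
        rw [← hGeq] at hab
        simp only [SimpleGraph.fromRel_adj] at hab
        obtain ⟨hne, hor⟩ := hab
        simp only [hGgl, SimpleGraph.comap_adj, Function.Embedding.coe_subtype,
          SimpleGraph.fromRel_adj]
        refine ⟨hsig_ne t a.1 b.1 hne, ?_⟩
        rcases hor with h3 | h3
        · have ham : a.1 ≠ m t := by
            intro hh
            apply hne
            rw [hh] at h3 ⊢
            rw [reroot_fix] at h3
            exact h3
          refine Or.inl ?_
          show P ⟨t, a.1⟩ = ⟨t, b.1⟩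
          rw [hP1 t a.1 ham]
          exact congrArg (Sigma.mk t) h3
        · have hbm : b.1 ≠ m t := by
            intro hh
            apply hne
            rw [hh] at h3 ⊢
            rw [reroot_fix] at h3
            exact h3.symm
          refine Or.inr ?_
          show P ⟨t, b.1⟩ = ⟨t, a.1⟩
          rw [hP1 t b.1 hbm]
          exact congrArg (Sigma.mk t) h3
      exact SimpleGraph.Reachable.map
        (⟨fun z => ⟨⟨t, z.1⟩, z.2⟩, fun {x y} hxy => Fadj x y hxy⟩ :
          ((SimpleGraph.fromRel fun x y => (Dloc t).parent x = y).induce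
            {s : (Dloc t).ι | v ∈ (Dloc t).bag s}) →g Ggl)
        (hc.preconnected ⟨s1, h1⟩ ⟨s2, h2⟩)
    have C1' : ∀ (x y : Σ t : Dstar.ι, (Dloc t).ι) (hx : x ∈ Sv) (hy : y ∈ Sv),
        x.1 = y.1 → Ggl.Reachable ⟨x, hx⟩ ⟨y, hy⟩ := by
      intro x y hx hy heq
      obtain ⟨t1, s1⟩ := x
      obtain ⟨t2, s2⟩ := y
      dsimp at heq
      subst heq
      exact C1 t1 s1 s2 hx hy
    -- cross edges
    have Cross : ∀ (t : Dstar.ι) (ht : t ≠ Dstar.root) (hσ : v ∈ Dstar.sigmaBag t),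
        Ggl.Adj ⟨⟨t, m t⟩, hmσ t hσ⟩ ⟨⟨Dstar.parent t, s' t⟩, hs'σ t hσ⟩ := by
      intro t ht hσ
      simp only [hGgl, SimpleGraph.comap_adj, SimpleGraph.fromRel_adj]
      refine ⟨?_, Or.inl (hP2 t ht)⟩
      intro hcontra
      apply ht
      have hfst : t = Dstar.parent t := congrArg Sigma.fst hcontra
      exact eq_root_of_parent_fix Dstar.reaches_root hfst.symm
    rw [SimpleGraph.connected_iff]
    constructor
    · -- preconnected
      intro A B
      obtain ⟨⟨t1, s1⟩, h1⟩ := A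
      obtain ⟨⟨t2, s2⟩, h2⟩ := B
      have hv1 : v ∈ Dstar.bag t1 := (Dloc t1).bag_subset s1 h1
      have hv2 : v ∈ Dstar.bag t2 := (Dloc t2).bag_subset s2 h2
      obtain ⟨wlk⟩ := (Dstar.bags_connected v (Finset.mem_univ v)).preconnected ⟨t1, hv1⟩ ⟨t2, hv2⟩
      -- induct along the walk in the Dstar tree
      have MAIN : ∀ (aT bT : ↥{t : Dstar.ι | v ∈ Dstar.bag t})
          (_ : ((SimpleGraph.fromRel fun x y => Dstar.parent x = y).induce
            {t : Dstar.ι | v ∈ Dstar.bag t}).Walk aT bT)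
          (sa : (Dloc aT.1).ι) (sb : (Dloc bT.1).ι)
          (ha : v ∈ (Dloc aT.1).bag sa) (hb : v ∈ (Dloc bT.1).bag sb),
          Ggl.Reachable ⟨⟨aT.1, sa⟩, ha⟩ ⟨⟨bT.1, sb⟩, hb⟩ := by
        intro aT bT wlk2
        induction wlk2 with
        | @nil u =>
          intro sa sb ha hb
          exact C1 u.1 sa sb ha hb
        | @cons u c wT huc q ih =>
          intro sa sb ha hb
          have hadjT : u.1 ≠ c.1 ∧ (Dstar.parent u.1 = c.1 ∨ Dstar.parent c.1 = u.1) := by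
            have := huc
            simp only [SimpleGraph.comap_adj, SimpleGraph.fromRel_adj] at this
            exact this
          obtain ⟨hneT, horT⟩ := hadjT
          rcases horT with hpc | hpc
          · -- parent u = c
            have htne : u.1 ≠ Dstar.root := by
              intro hh
              apply hneT
              rw [hh, ← hpc, hh, Dstar.parent_root]
            have hvσ : v ∈ Dstar.sigmaBag u.1 := by
              rw [RTDOn.sigmaBag, if_neg htne]
              exact Finset.mem_inter.mpr ⟨u.2, by rw [hpc]; exact c.2⟩
            obtain ⟨⟨sc, hsc⟩⟩ := ((Dloc c.1).bags_connected v c.2).nonempty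
            have r1 := C1 u.1 sa (m u.1) ha (hmσ u.1 hvσ)
            have r2 := (Cross u.1 htne hvσ).reachable
            have r3 := C1' ⟨Dstar.parent u.1, s' u.1⟩ ⟨c.1, sc⟩ (hs'σ u.1 hvσ) hsc hpc
            have r4 := ih sc sb hsc hb
            exact ((r1.trans r2).trans r3).trans r4
          · -- parent c = u
            have hcne : c.1 ≠ Dstar.root := by
              intro hh
              apply hneT
              rw [← hpc, hh, Dstar.parent_root]
            have hvσ : v ∈ Dstar.sigmaBag c.1 := by
              rw [RTDOn.sigmaBag, if_neg hcne]
              exact Finset.mem_inter.mpr ⟨c.2, by rw [hpc]; exact u.2⟩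
            have r1 := C1' ⟨u.1, sa⟩ ⟨Dstar.parent c.1, s' c.1⟩ ha (hs'σ c.1 hvσ) hpc.symm
            have r2 := (Cross c.1 hcne hvσ).symm.reachable
            have r3 := ih (m c.1) sb (hmσ c.1 hvσ) hb
            exact (r1.trans r2).trans r3
      exact MAIN ⟨t1, hv1⟩ ⟨t2, hv2⟩ wlk s1 s2 h1 h2
    · -- nonempty
      obtain ⟨⟨t0, ht0⟩⟩ := (Dstar.bags_connected v (Finset.mem_univ v)).nonempty
      obtain ⟨⟨s0, hs0⟩⟩ := ((Dloc t0).bags_connected v ht0).nonempty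
      exact ⟨⟨⟨t0, s0⟩, hs0⟩⟩
  refine ⟨⟨Σ t : Dstar.ι, (Dloc t).ι, inferInstance, inferInstance,
    ⟨Dstar.root, m Dstar.root⟩, P, hP3, hREACH,
    fun x => (Dloc x.1).bag x.2, fun x => Finset.subset_univ _,
    hCONN, hEDGE⟩, fun x => hWIDTH x, hADH, fun x => ⟨x.1, x.2, rfl⟩⟩
end
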